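/- Fix ℓ > 0 and define, for r > 3ℓ: a(r) = (1/2)√((r−3ℓ)(r+ℓ)), b(r) = ℓ√((r−3ℓ)(r+ℓ))/(r−ℓ), c(r) = √((r²−ℓ²)/2), and h(r) = (r−ℓ)/√((r−3ℓ)(r+ℓ)). Then a, b, c, h satisfy the first-order system (15) in h-form on the interval (3ℓ, ∞). (These are the metric functions of the Spin(7) metric (37) on the manifold 𝔹₈, the bundle of chiral spinors over S⁴.) -/

import Mathlib

/-- The metric functions of the new Spin(7) metric (37) on the manifold `𝔹₈`
(the bundle of chiral spinors over `S⁴`): for `ℓ > 0` and `r > 3ℓ`,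
`a = (1/2)√((r-3ℓ)(r+ℓ))`, `b = ℓ√((r-3ℓ)(r+ℓ))/(r-ℓ)`,
`c = √((r²-ℓ²)/2)`, `h = (r-ℓ)/√((r-3ℓ)(r+ℓ))`
satisfy the first-order system (15) in `h`-form:
`(1/h) a' = 1 - b/(2a) - a²/c²`, `(1/h) b' = b²/(2a²) - b²/c²`,
`(1/h) c' = a/c + b/(2c)`. -/
theorem B8_solves_firstOrderSystem
    (ℓ : ℝ) (hℓ : 0 < ℓ)
    (a b c h : ℝ → ℝ)
    (hadef : a = fun r => (1 / 2) * Real.sqrt ((r - 3 * ℓ) * (r + ℓ)))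
    (hbdef : b = fun r => ℓ * Real.sqrt ((r - 3 * ℓ) * (r + ℓ)) / (r - ℓ))
    (hcdef : c = fun r => Real.sqrt ((r ^ 2 - ℓ ^ 2) / 2))
    (hhdef : h = fun r => (r - ℓ) / Real.sqrt ((r - 3 * ℓ) * (r + ℓ))) :
    ∀ r ∈ Set.Ioi (3 * ℓ),
      (1 / h r) * deriv a r = 1 - b r / (2 * a r) - (a r) ^ 2 / (c r) ^ 2 ∧
      (1 / h r) * deriv b r = (b r) ^ 2 / (2 * (a r) ^ 2) - (b r) ^ 2 / (c r) ^ 2 ∧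
      (1 / h r) * deriv c r = a r / c r + b r / (2 * c r) := by
  intro r hr
  simp only [Set.mem_Ioi] at hr
  have h1 : 0 < r - 3 * ℓ := by linarith
  have h2 : 0 < r + ℓ := by linarith
  have h3 : 0 < r - ℓ := by linarith
  have hprod : 0 < (r - 3 * ℓ) * (r + ℓ) := mul_pos h1 h2
  have hsp : 0 < Real.sqrt ((r - 3 * ℓ) * (r + ℓ)) := Real.sqrt_pos.mpr hprod
  have hs2 : Real.sqrt ((r - 3 * ℓ) * (r + ℓ)) ^ 2 = (r - 3 * ℓ) * (r + ℓ) :=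
    Real.sq_sqrt hprod.le
  have hq : 0 < (r ^ 2 - ℓ ^ 2) / 2 := by nlinarith
  have htp : 0 < Real.sqrt ((r ^ 2 - ℓ ^ 2) / 2) := Real.sqrt_pos.mpr hq
  have ht2 : Real.sqrt ((r ^ 2 - ℓ ^ 2) / 2) ^ 2 = (r ^ 2 - ℓ ^ 2) / 2 :=
    Real.sq_sqrt hq.le
  have hp : HasDerivAt (fun x : ℝ => (x - 3 * ℓ) * (x + ℓ)) (2 * r - 2 * ℓ) r := by
    have := ((hasDerivAt_id r).sub_const (3 * ℓ)).mul ((hasDerivAt_id r).add_const ℓ)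
    refine this.congr_deriv ?_
    simp; ring
  have hsqrt : HasDerivAt (fun x : ℝ => Real.sqrt ((x - 3 * ℓ) * (x + ℓ)))
      ((2 * r - 2 * ℓ) / (2 * Real.sqrt ((r - 3 * ℓ) * (r + ℓ)))) r :=
    hp.sqrt (ne_of_gt hprod)
  have hda : HasDerivAt a
      ((1 / 2) * ((2 * r - 2 * ℓ) / (2 * Real.sqrt ((r - 3 * ℓ) * (r + ℓ))))) r := by
    rw [hadef]; exact hsqrt.const_mul _
  have hdb : HasDerivAt b
      ((ℓ * ((2 * r - 2 * ℓ) / (2 * Real.sqrt ((r - 3 * ℓ) * (r + ℓ)))) * (r - ℓ)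
        - ℓ * Real.sqrt ((r - 3 * ℓ) * (r + ℓ)) * 1) / (r - ℓ) ^ 2) r := by
    rw [hbdef]
    exact (hsqrt.const_mul ℓ).div ((hasDerivAt_id r).sub_const ℓ) (ne_of_gt h3)
  have hdc : HasDerivAt c (r / (2 * Real.sqrt ((r ^ 2 - ℓ ^ 2) / 2))) r := by
    rw [hcdef]
    have hin : HasDerivAt (fun x : ℝ => (x ^ 2 - ℓ ^ 2) / 2) r r := by
      have := ((hasDerivAt_pow 2 r).sub_const (ℓ ^ 2)).div_const 2
      refine this.congr_deriv ?_; ring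
    exact hin.sqrt (ne_of_gt hq)
  rw [hda.deriv, hdb.deriv, hdc.deriv, hadef, hbdef, hcdef, hhdef]
  simp only
  set s := Real.sqrt ((r - 3 * ℓ) * (r + ℓ)) with hs_def
  set t := Real.sqrt ((r ^ 2 - ℓ ^ 2) / 2) with ht_def
  have e3 : s ^ 3 = (r - 3 * ℓ) * (r + ℓ) * s := by
    rw [pow_succ, hs2]
  have e4 : s ^ 4 = ((r - 3 * ℓ) * (r + ℓ)) ^ 2 := by
    rw [show (4 : ℕ) = 2 * 2 from rfl, pow_mul, hs2]
  have e5 : s ^ 5 = ((r - 3 * ℓ) * (r + ℓ)) ^ 2 * s := by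
    rw [pow_succ, e4]
  refine ⟨?_, ?_, ?_⟩
  · field_simp
    ring_nf
    simp only [e5, e4, e3, hs2, ht2]
    ring
  · field_simp
    ring_nf
    simp only [e5, e4, e3, hs2, ht2]
    ring
  · field_simp
    ring_nf
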